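/- arXiv:2512.10247 — 3 statements merged into one kernel-verified Lean document; each statement's English description precedes it below -/
import Mathlib

section
/- Let H be a Hermitian operator with unique ground state |ψ₀⟩ of energy E₀ and spectral gap E₁ − E₀ ≥ Δ > 0. Let A be Hermitian with ‖A‖ ≤ 1, and let Â_f be the filtered operator with Gaussian filter f̂(ν) = exp(−ν²/(2σ²)). Then ‖(I − |ψ₀⟩⟨ψ₀|) Â_f |ψ₀⟩⟨ψ₀|‖ ≤ exp(−Δ²/(2σ²)). -/
open Matrix Finset

noncomputable section

/-- The rank-one operator `|ψ i⟩⟨ψ i|`. -/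
def ketbra {n : ℕ} (ψ : Fin n → Fin n → ℂ) (i : Fin n) : Matrix (Fin n) (Fin n) ℂ :=
  Matrix.vecMulVec (ψ i) (star (ψ i))

/-- The set of Bohr frequencies `{E i - E j}` of the Hamiltonian. -/
def bohrSet {n : ℕ} (E : Fin n → ℝ) : Finset ℝ :=
  Finset.image (fun p : Fin n × Fin n => E p.1 - E p.2) Finset.univ

/-- The Bohr-frequency component `A_ν = ∑_{E i - E j = ν} |ψ i⟩⟨ψ i| A |ψ j⟩⟨ψ j|`. -/
def bohrComp {n : ℕ} (ψ : Fin n → Fin n → ℂ) (E : Fin n → ℝ)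
    (A : Matrix (Fin n) (Fin n) ℂ) (ν : ℝ) : Matrix (Fin n) (Fin n) ℂ :=
  ∑ i, ∑ j, if E i - E j = ν then ketbra ψ i * A * ketbra ψ j else 0

/-- The ℓ²→ℓ² operator norm of a matrix. -/
def opNorm {n : ℕ} (M : Matrix (Fin n) (Fin n) ℂ) : ℝ :=
  ‖Matrix.toEuclideanCLM (𝕜 := ℂ) M‖

/-- The Gaussian-filtered operator `Â_f = ∑_ν e^{-ν²/2σ²} A_ν`. -/
def gaussFiltered {n : ℕ} (ψ : Fin n → Fin n → ℂ) (E : Fin n → ℝ)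
    (A : Matrix (Fin n) (Fin n) ℂ) (σ : ℝ) : Matrix (Fin n) (Fin n) ℂ :=
  ∑ ν ∈ bohrSet E, (Real.exp (-(ν ^ 2) / (2 * σ ^ 2)) : ℂ) • bohrComp ψ E A ν

open scoped Matrix.Norms.L2Operator

lemma opNorm_eq_l2 {n : ℕ} (M : Matrix (Fin n) (Fin n) ℂ) : opNorm M = ‖M‖ := rfl

lemma vmv_mul_vmv {n : ℕ} (u v w x : Fin n → ℂ) :
    vecMulVec u v * vecMulVec w x = (v ⬝ᵥ w) • vecMulVec u x := by
  ext a b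
  simp only [Matrix.mul_apply, vecMulVec_apply, Matrix.smul_apply, smul_eq_mul, dotProduct,
    Finset.sum_mul]
  exact Finset.sum_congr rfl fun k _ => by ring

lemma vmv_mul {n : ℕ} (M : Matrix (Fin n) (Fin n) ℂ) (u v : Fin n → ℂ) :
    vecMulVec u v * M = vecMulVec u (v ᵥ* M) := by
  ext a b
  simp only [Matrix.mul_apply, vecMulVec_apply, Matrix.vecMul, dotProduct, Finset.mul_sum]
  exact Finset.sum_congr rfl fun k _ => by ring

lemma vmv_conjT {n : ℕ} (u v : Fin n → ℂ) :
    (vecMulVec u v)ᴴ = vecMulVec (star v) (star u) := by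
  ext a b
  simp [vecMulVec_apply, mul_comm]

lemma star_dotP {n : ℕ} (u v : Fin n → ℂ) :
    star (star u ⬝ᵥ v) = star v ⬝ᵥ u := by
  simp only [dotProduct, star_sum, star_mul', star_star, Pi.star_apply]
  exact Finset.sum_congr rfl fun k _ => by ring

lemma sandwich {n : ℕ} (ψ : Fin n → Fin n → ℂ) (A : Matrix (Fin n) (Fin n) ℂ) (i j : Fin n) :
    ketbra ψ i * A * ketbra ψ j
      = (star (ψ i) ⬝ᵥ A *ᵥ ψ j) • vecMulVec (ψ i) (star (ψ j)) := by
  rw [ketbra, ketbra, vmv_mul, vmv_mul_vmv, Matrix.dotProduct_mulVec]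

lemma ketbra_mul_ketbra {n : ℕ} (ψ : Fin n → Fin n → ℂ)
    (horth : ∀ i j, star (ψ i) ⬝ᵥ ψ j = if i = j then (1 : ℂ) else 0) (i j : Fin n) :
    ketbra ψ i * ketbra ψ j = if i = j then ketbra ψ i else 0 := by
  rw [ketbra, ketbra, vmv_mul_vmv, horth]
  split_ifs with h
  · subst h; simp [ketbra]
  · simp

lemma norm_ketbra_self_eq_one {n : ℕ} (ψ : Fin n → Fin n → ℂ) (i : Fin n)
    (hψ : star (ψ i) ⬝ᵥ ψ i = 1) : ‖ketbra ψ i‖ = 1 := by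
  have hP : (ketbra ψ i)ᴴ * ketbra ψ i = ketbra ψ i := by
    rw [ketbra, vmv_conjT, star_star, vmv_mul_vmv, hψ, one_smul]
  have hne : ketbra ψ i ≠ 0 := by
    intro h0
    have h1 : (1 : ℂ) = 0 := by
      rw [← hψ]
      have h2 : ∀ k l, ψ i k * star (ψ i l) = 0 := by
        intro k l
        have := congrFun (congrFun h0 k) l
        simpa [ketbra, vecMulVec_apply] using this
      simp only [dotProduct, Pi.star_apply]
      calc ∑ k, star (ψ i k) * ψ i k = ∑ k : Fin n, (0 : ℂ) := by
            refine Finset.sum_congr rfl fun k _ => ?_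
            rw [mul_comm]
            exact h2 k k
        _ = 0 := by simp
    exact one_ne_zero h1
  have h1 : ‖ketbra ψ i‖ * ‖ketbra ψ i‖ = ‖ketbra ψ i‖ * 1 := by
    rw [← Matrix.l2_opNorm_conjTranspose_mul_self, hP, mul_one]
  have h2 : ‖ketbra ψ i‖ ≠ 0 := by simpa using hne
  exact mul_left_cancel₀ h2 h1

/-- the off-diagonal block of the Gaussian-filtered operator is suppressed:
`‖(I − |ψ₀⟩⟨ψ₀|) Â_f |ψ₀⟩⟨ψ₀|‖ ≤ e^{−Δ²/(2σ²)}`. -/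
theorem gauss_filtered_offdiag_small {d : ℕ} (ψ : Fin (d + 1) → Fin (d + 1) → ℂ)
    (E : Fin (d + 1) → ℝ) (H A : Matrix (Fin (d + 1)) (Fin (d + 1)) ℂ) (Δ σ : ℝ)
    (horth : ∀ i j, star (ψ i) ⬝ᵥ ψ j = if i = j then (1 : ℂ) else 0)
    (hcomplete : ∑ i, ketbra ψ i = 1)
    (hH : H = ∑ i, (E i : ℂ) • ketbra ψ i)
    (hgap : ∀ i : Fin (d + 1), i ≠ 0 → E 0 + Δ ≤ E i)
    (hΔ : 0 < Δ) (hσ : 0 < σ)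
    (hA : A.IsHermitian) (hAnorm : opNorm A ≤ 1) :
    opNorm ((1 - ketbra ψ 0) * gaussFiltered ψ E A σ * ketbra ψ 0)
      ≤ Real.exp (-(Δ ^ 2) / (2 * σ ^ 2)) := by
  classical
  set f : ℝ → ℝ := fun ν => Real.exp (-(ν ^ 2) / (2 * σ ^ 2)) with hf
  set cst : ℝ := Real.exp (-(Δ ^ 2) / (2 * σ ^ 2)) with hcst
  have hcstpos : 0 < cst := Real.exp_pos _
  set a : Fin (d + 1) → ℂ := fun i => star (ψ i) ⬝ᵥ A *ᵥ ψ 0 with ha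
  have haeq : ∀ i, star (ψ i) ⬝ᵥ A *ᵥ ψ 0 = a i := fun i => rfl
  set c : Fin (d + 1) → ℂ := fun i => (f (E i - E 0) : ℂ) * a i with hc
  set M : Matrix (Fin (d + 1)) (Fin (d + 1)) ℂ :=
    (1 - ketbra ψ 0) * gaussFiltered ψ E A σ * ketbra ψ 0 with hMdef
  have hP0 : ‖ketbra ψ 0‖ = 1 := norm_ketbra_self_eq_one ψ 0 (by rw [horth, if_pos rfl])
  rw [opNorm_eq_l2] at hAnorm ⊢
  -- Step 1: bohrComp * P0
  have step1 : ∀ ν : ℝ, bohrComp ψ E A ν * ketbra ψ 0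
      = ∑ i, if E i - E 0 = ν then ketbra ψ i * A * ketbra ψ 0 else 0 := by
    intro ν
    rw [bohrComp, Finset.sum_mul]
    refine Finset.sum_congr rfl fun i _ => ?_
    rw [Finset.sum_mul, Finset.sum_eq_single 0]
    · split_ifs with h
      · rw [mul_assoc, ketbra_mul_ketbra ψ horth 0 0, if_pos rfl]
      · simp
    · intro j _ hj
      split_ifs with h
      · rw [mul_assoc, ketbra_mul_ketbra ψ horth j 0, if_neg hj, mul_zero]
      · simp
    · simp
  -- Step 2: gaussFiltered * P0
  have step2 : gaussFiltered ψ E A σ * ketbra ψ 0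
      = ∑ i, (f (E i - E 0) : ℂ) • (ketbra ψ i * A * ketbra ψ 0) := by
    rw [gaussFiltered, Finset.sum_mul]
    have hcg : ∀ ν ∈ bohrSet E,
        ((f ν : ℂ) • bohrComp ψ E A ν) * ketbra ψ 0
          = ∑ i, if E i - E 0 = ν then (f ν : ℂ) • (ketbra ψ i * A * ketbra ψ 0) else 0 := by
      intro ν _
      rw [Matrix.smul_mul, step1, Finset.smul_sum]
      refine Finset.sum_congr rfl fun i _ => ?_
      rw [smul_ite, smul_zero]
    rw [Finset.sum_congr rfl hcg, Finset.sum_comm]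
    refine Finset.sum_congr rfl fun i _ => ?_
    have hmem : E i - E 0 ∈ bohrSet E :=
      Finset.mem_image.2 ⟨(i, 0), Finset.mem_univ _, rfl⟩
    rw [Finset.sum_ite_eq (bohrSet E) (E i - E 0)
      (fun ν => (f ν : ℂ) • (ketbra ψ i * A * ketbra ψ 0)), if_pos hmem]
  -- Step 3: M as a sum of rank-one pieces
  have step3 : M = ∑ i, if i = 0 then 0 else c i • vecMulVec (ψ i) (star (ψ 0)) := by
    rw [hMdef, mul_assoc, step2, Finset.mul_sum]
    refine Finset.sum_congr rfl fun i _ => ?_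
    have h0i : ketbra ψ 0 * (ketbra ψ i * A * ketbra ψ 0)
        = if 0 = i then ketbra ψ i * A * ketbra ψ 0 else 0 := by
      rw [show ketbra ψ i * A * ketbra ψ 0 = ketbra ψ i * (A * ketbra ψ 0) from
        mul_assoc _ _ _, ← mul_assoc, ketbra_mul_ketbra ψ horth 0 i]
      split_ifs with h
      · subst h; rfl
      · rw [Matrix.zero_mul]
    rw [mul_smul_comm, sub_mul, one_mul, h0i]
    by_cases h : i = 0
    · subst h
      rw [if_pos rfl, if_pos rfl]
      simp
    · rw [if_neg (fun hh : (0 : Fin (d + 1)) = i => h hh.symm), if_neg h, sub_zero,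
        sandwich, haeq, smul_smul]
  -- Step 4: Mᴴ * M equals a multiple of the ground-state projector
  set r : ℝ := ∑ i, if i = 0 then 0 else ‖c i‖ ^ 2 with hr
  have hrnonneg : 0 ≤ r := by
    refine Finset.sum_nonneg fun i _ => ?_
    split_ifs
    · exact le_refl 0
    · positivity
  have step4 : Mᴴ * M = (r : ℂ) • ketbra ψ 0 := by
    have hterm : ∀ i j : Fin (d + 1),
        (if i = 0 then 0 else c i • vecMulVec (ψ i) (star (ψ 0)))ᴴ
          * (if j = 0 then 0 else c j • vecMulVec (ψ j) (star (ψ 0)))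
        = if j = i then (if i = 0 then 0 else ((‖c i‖ : ℂ) ^ 2) • ketbra ψ 0) else 0 := by
      intro i j
      by_cases hi : i = 0
      · subst hi
        simp
      by_cases hj : j = 0
      · subst hj
        rw [if_pos rfl, mul_zero, if_neg (fun hh : (0 : Fin (d + 1)) = i => hi hh.symm)]
      rw [if_neg hi, if_neg hj, Matrix.conjTranspose_smul, vmv_conjT, star_star,
        Matrix.smul_mul, Matrix.mul_smul, smul_smul, vmv_mul_vmv, horth]
      by_cases h : i = j
      · subst h
        rw [if_pos rfl, if_pos rfl, if_neg hi, one_smul, ketbra]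
        congr 1
        rw [RCLike.star_def, RCLike.conj_mul]
        norm_cast
      · rw [if_neg h, if_neg (fun hh : j = i => h hh.symm), zero_smul, smul_zero]
    have hsum : Mᴴ * M
        = ∑ i, if i = 0 then 0 else ((‖c i‖ : ℂ) ^ 2) • ketbra ψ 0 := by
      rw [step3, Matrix.conjTranspose_sum, Finset.sum_mul]
      refine Finset.sum_congr rfl fun i _ => ?_
      rw [Finset.mul_sum, Finset.sum_congr rfl (fun j _ => hterm i j),
        Finset.sum_ite_eq' Finset.univ i
          (fun _ => if i = 0 then 0 else ((‖c i‖ : ℂ) ^ 2) • ketbra ψ 0),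
        if_pos (Finset.mem_univ i)]
    rw [hsum]
    have hrc : ((r : ℝ) : ℂ) = ∑ i, if i = 0 then 0 else (‖c i‖ : ℂ) ^ 2 := by
      rw [hr]
      push_cast
      refine Finset.sum_congr rfl fun i _ => ?_
      split_ifs <;> norm_num
    rw [hrc, Finset.sum_smul]
    refine Finset.sum_congr rfl fun i _ => ?_
    split_ifs <;> simp
  -- norm of M squared equals r
  have hM2 : ‖M‖ * ‖M‖ = r := by
    rw [← Matrix.l2_opNorm_conjTranspose_mul_self, step4, norm_smul, hP0, mul_one]
    rw [Complex.norm_real, Real.norm_eq_abs, abs_of_nonneg hrnonneg]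
  -- Step 5: ∑ ‖a i‖² ≤ 1
  set s : ℝ := ∑ i, ‖a i‖ ^ 2 with hs
  have hsnonneg : 0 ≤ s := Finset.sum_nonneg fun i _ => by positivity
  have hterm2 : ∀ i : Fin (d + 1),
      ketbra ψ 0 * Aᴴ * ketbra ψ i * (A * ketbra ψ 0)
        = ((‖a i‖ : ℂ) ^ 2) • ketbra ψ 0 := by
    intro i
    have hb : star (ψ 0) ⬝ᵥ Aᴴ *ᵥ ψ i = star (a i) := by
      rw [← haeq i, star_dotP, Matrix.star_mulVec, ← Matrix.dotProduct_mulVec]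
    rw [sandwich ψ Aᴴ 0 i, hb, Matrix.smul_mul, ← mul_assoc, vmv_mul, ketbra, vmv_mul_vmv,
      ← Matrix.dotProduct_mulVec, haeq, smul_smul]
    congr 1
    rw [RCLike.star_def, RCLike.conj_mul]
    norm_cast
  have step5 : ketbra ψ 0 * Aᴴ * (A * ketbra ψ 0) = (s : ℂ) • ketbra ψ 0 := by
    calc ketbra ψ 0 * Aᴴ * (A * ketbra ψ 0)
        = ketbra ψ 0 * Aᴴ * ((∑ i, ketbra ψ i) * (A * ketbra ψ 0)) := by
          rw [hcomplete, Matrix.one_mul]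
      _ = ∑ i, ketbra ψ 0 * Aᴴ * ketbra ψ i * (A * ketbra ψ 0) := by
          rw [Finset.sum_mul, Finset.mul_sum]
          exact Finset.sum_congr rfl fun i _ => (mul_assoc _ _ _).symm
      _ = ∑ i, ((‖a i‖ : ℂ) ^ 2) • ketbra ψ 0 := Finset.sum_congr rfl fun i _ => hterm2 i
      _ = (s : ℂ) • ketbra ψ 0 := by
          rw [← Finset.sum_smul]
          congr 1
          rw [hs]
          push_cast
          rfl
  have hs1 : s ≤ 1 := by
    have hseq : s = ‖ketbra ψ 0 * Aᴴ * (A * ketbra ψ 0)‖ := by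
      rw [step5, norm_smul, hP0, mul_one, Complex.norm_real, Real.norm_eq_abs,
        abs_of_nonneg hsnonneg]
    have b1 : ‖ketbra ψ 0 * Aᴴ * (A * ketbra ψ 0)‖
        ≤ ‖ketbra ψ 0 * Aᴴ‖ * ‖A * ketbra ψ 0‖ := Matrix.l2_opNorm_mul _ _
    have b2 : ‖ketbra ψ 0 * Aᴴ‖ ≤ ‖ketbra ψ 0‖ * ‖Aᴴ‖ := Matrix.l2_opNorm_mul _ _
    have b3 : ‖A * ketbra ψ 0‖ ≤ ‖A‖ * ‖ketbra ψ 0‖ := Matrix.l2_opNorm_mul _ _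
    rw [hP0, Matrix.l2_opNorm_conjTranspose, one_mul] at b2
    rw [hP0, mul_one] at b3
    have hA0 : (0 : ℝ) ≤ ‖A‖ := norm_nonneg _
    have hn1 : (0 : ℝ) ≤ ‖ketbra ψ 0 * Aᴴ‖ := norm_nonneg _
    have hn2 : (0 : ℝ) ≤ ‖A * ketbra ψ 0‖ := norm_nonneg _
    nlinarith
  -- Step 6: r ≤ cst² * s
  have step6 : r ≤ cst ^ 2 * s := by
    rw [hr, hs, Finset.mul_sum]
    refine Finset.sum_le_sum fun i _ => ?_
    split_ifs with h
    · positivity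
    · have hgap' : Δ ≤ E i - E 0 := by
        have := hgap i h
        linarith
      have hfpos : 0 < f (E i - E 0) := Real.exp_pos _
      have hfle : f (E i - E 0) ≤ cst := by
        rw [hf, hcst]
        apply Real.exp_le_exp.2
        have hpos : (0 : ℝ) < 2 * σ ^ 2 := by positivity
        have h2 : Δ ^ 2 ≤ (E i - E 0) ^ 2 := by nlinarith
        exact (div_le_div_iff_of_pos_right hpos).2 (by linarith)
      have hcn : ‖c i‖ = f (E i - E 0) * ‖a i‖ := by
        show ‖(↑(f (E i - E 0)) * a i : ℂ)‖ = _
        rw [norm_mul, Complex.norm_real, Real.norm_eq_abs, abs_of_pos hfpos]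
      calc ‖c i‖ ^ 2 = f (E i - E 0) ^ 2 * ‖a i‖ ^ 2 := by rw [hcn, mul_pow]
        _ ≤ cst ^ 2 * ‖a i‖ ^ 2 :=
            mul_le_mul_of_nonneg_right (pow_le_pow_left₀ hfpos.le hfle 2) (by positivity)
  -- Final: conclude
  have hrle : r ≤ cst ^ 2 := by
    calc r ≤ cst ^ 2 * s := step6
      _ ≤ cst ^ 2 * 1 := by
          apply mul_le_mul_of_nonneg_left hs1 (by positivity)
      _ = cst ^ 2 := mul_one _
  nlinarith [norm_nonneg M]
end
end

section
/- Under the same Gaussian-filter setting, there exists an operator A⊥ with A⊥|ψ₀⟩ = 0 and ⟨ψ₀|A⊥ = 0 such that ‖Â_f − |ψ₀⟩⟨ψ₀| A |ψ₀⟩⟨ψ₀| − A⊥‖ ≤ e^{−Δ²/(2σ²)}. (Almost block-diagonality of the Gaussian-filtered operator.) -/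
open Matrix Finset

noncomputable section

lemma gfabd_vecMulVec_mulVec {n : ℕ} (w v x : Fin n → ℂ) :
    vecMulVec w v *ᵥ x = (v ⬝ᵥ x) • w := by
  ext i; simp [vecMulVec_apply, mulVec, dotProduct, Finset.sum_mul, Finset.mul_sum]
  exact Finset.sum_congr rfl fun k _ => by ring

lemma gfabd_vecMul_vecMulVec {n : ℕ} (w v x : Fin n → ℂ) :
    x ᵥ* vecMulVec w v = (x ⬝ᵥ w) • v := by
  ext j; simp [vecMulVec_apply, vecMul, dotProduct, Finset.sum_mul, Finset.mul_sum]
  exact Finset.sum_congr rfl fun k _ => by ring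

lemma gfabd_mul_vecMulVec {n : ℕ} (M : Matrix (Fin n) (Fin n) ℂ) (w v : Fin n → ℂ) :
    M * vecMulVec w v = vecMulVec (M *ᵥ w) v := by
  ext i j; simp [vecMulVec_apply, mul_apply, mulVec, dotProduct, Finset.sum_mul]
  exact Finset.sum_congr rfl fun k _ => by ring

lemma gfabd_vecMulVec_mul_vecMulVec {n : ℕ} (w v w' v' : Fin n → ℂ) :
    vecMulVec w v * vecMulVec w' v' = (v ⬝ᵥ w') • vecMulVec w v' := by
  ext i j; simp [vecMulVec_apply, mul_apply, dotProduct, Finset.sum_mul, Finset.mul_sum]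
  exact Finset.sum_congr rfl fun k _ => by ring

lemma gfabd_ketbra_mul_mul {n : ℕ} (ψ : Fin n → Fin n → ℂ) (A : Matrix (Fin n) (Fin n) ℂ)
    (i j : Fin n) :
    ketbra ψ i * A * ketbra ψ j
      = (star (ψ i) ⬝ᵥ (A *ᵥ ψ j)) • vecMulVec (ψ i) (star (ψ j)) := by
  rw [ketbra, ketbra, mul_assoc, gfabd_mul_vecMulVec, gfabd_vecMulVec_mul_vecMulVec]

lemma gfabd_gaussFiltered_eq {n : ℕ} (ψ : Fin n → Fin n → ℂ) (E : Fin n → ℝ)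
    (A : Matrix (Fin n) (Fin n) ℂ) (σ : ℝ) :
    gaussFiltered ψ E A σ
      = ∑ i, ∑ j, (Real.exp (-((E i - E j) ^ 2) / (2 * σ ^ 2)) : ℂ) •
          (ketbra ψ i * A * ketbra ψ j) := by
  unfold gaussFiltered bohrComp
  simp only [Finset.smul_sum, smul_ite, smul_zero]
  rw [Finset.sum_comm]
  refine Finset.sum_congr rfl fun i _ => ?_
  rw [Finset.sum_comm]
  refine Finset.sum_congr rfl fun j _ => ?_
  rw [Finset.sum_ite_eq (bohrSet E) (E i - E j)
    (fun ν => (Real.exp (-(ν ^ 2) / (2 * σ ^ 2)) : ℂ) • (ketbra ψ i * A * ketbra ψ j))]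
  simp [bohrSet]

-- squared ℓ² norm
def gfabdN2 {n : ℕ} (a : Fin n → ℂ) : ℝ := ∑ i, ‖a i‖ ^ 2

lemma gfabd_star_dot_self {n : ℕ} (a : Fin n → ℂ) :
    star a ⬝ᵥ a = (gfabdN2 a : ℂ) := by
  simp only [dotProduct, gfabdN2, Complex.ofReal_sum]
  refine Finset.sum_congr rfl fun i _ => ?_
  simp only [Pi.star_apply]
  rw [RCLike.star_def, mul_comm, Complex.mul_conj']
  push_cast; ring

lemma gfabd_conj_dot {n : ℕ} (ψj x : Fin n → ℂ) :
    (starRingEnd ℂ) (star ψj ⬝ᵥ x) = star x ⬝ᵥ ψj := by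
  simpa using (Matrix.star_dotProduct x (ψj)).symm

lemma gfabd_sum_mulVec {n : ℕ} {ι : Type*} (s : Finset ι)
    (f : ι → Matrix (Fin n) (Fin n) ℂ) (v : Fin n → ℂ) :
    (∑ k ∈ s, f k) *ᵥ v = ∑ k ∈ s, f k *ᵥ v := by
  ext i
  simp [mulVec, dotProduct, Matrix.sum_apply, Finset.sum_mul]
  rw [Finset.sum_comm]

lemma gfabd_sum_vecMul {n : ℕ} {ι : Type*} (s : Finset ι)
    (f : ι → Matrix (Fin n) (Fin n) ℂ) (v : Fin n → ℂ) :
    v ᵥ* (∑ k ∈ s, f k) = ∑ k ∈ s, v ᵥ* f k := by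
  ext i
  simp [vecMul, dotProduct, Matrix.sum_apply, Finset.mul_sum]
  rw [Finset.sum_comm]

lemma gfabd_dot_sum {n : ℕ} {ι : Type*} (s : Finset ι)
    (v : Fin n → ℂ) (f : ι → Fin n → ℂ) :
    v ⬝ᵥ (∑ k ∈ s, f k) = ∑ k ∈ s, v ⬝ᵥ f k := by
  simp [dotProduct, Finset.mul_sum, Finset.sum_apply]
  rw [Finset.sum_comm]

lemma gfabd_sum_dot {n : ℕ} {ι : Type*} (s : Finset ι)
    (f : ι → Fin n → ℂ) (v : Fin n → ℂ) :
    (∑ k ∈ s, f k) ⬝ᵥ v = ∑ k ∈ s, f k ⬝ᵥ v := by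
  simp [dotProduct, Finset.sum_mul, Finset.sum_apply]
  rw [Finset.sum_comm]

lemma gfabd_vecMul_smulM {n : ℕ} (x : Fin n → ℂ) (c : ℂ) (M : Matrix (Fin n) (Fin n) ℂ) :
    x ᵥ* (c • M) = c • (x ᵥ* M) := by
  ext j
  simp [vecMul, dotProduct, Finset.mul_sum]
  exact Finset.sum_congr rfl fun k _ => by ring

lemma gfabd_parseval {n : ℕ} (ψ : Fin n → Fin n → ℂ)
    (hcomplete : ∑ i, ketbra ψ i = 1) (x : Fin n → ℂ) :
    ∑ j, ‖star (ψ j) ⬝ᵥ x‖ ^ 2 = gfabdN2 x := by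
  have key : ∀ j, ((‖star (ψ j) ⬝ᵥ x‖ ^ 2 : ℝ) : ℂ) = star x ⬝ᵥ (ketbra ψ j *ᵥ x) := by
    intro j
    rw [ketbra, gfabd_vecMulVec_mulVec, dotProduct_smul, ← gfabd_conj_dot (ψ j) x,
      smul_eq_mul, Complex.mul_conj']
    push_cast
    ring
  have h2 : ((∑ j, ‖star (ψ j) ⬝ᵥ x‖ ^ 2 : ℝ) : ℂ) = (gfabdN2 x : ℂ) := by
    rw [Complex.ofReal_sum]
    calc ∑ j, ((‖star (ψ j) ⬝ᵥ x‖ ^ 2 : ℝ) : ℂ)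
        = ∑ j, star x ⬝ᵥ (ketbra ψ j *ᵥ x) := Finset.sum_congr rfl fun j _ => key j
      _ = star x ⬝ᵥ ((∑ j, ketbra ψ j) *ᵥ x) := by
          rw [gfabd_sum_mulVec, gfabd_dot_sum]
      _ = star x ⬝ᵥ x := by rw [hcomplete, Matrix.one_mulVec]
      _ = (gfabdN2 x : ℂ) := gfabd_star_dot_self x
  exact_mod_cast h2

lemma gfabd_N2_coeff {n : ℕ} (ψ : Fin n → Fin n → ℂ)
    (horth : ∀ i j, star (ψ i) ⬝ᵥ ψ j = if i = j then (1 : ℂ) else 0)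
    (γ : Fin n → ℂ) :
    gfabdN2 (∑ i, γ i • ψ i) = ∑ i, ‖γ i‖ ^ 2 := by
  have h2 : (gfabdN2 (∑ i, γ i • ψ i) : ℂ) = ((∑ i, ‖γ i‖ ^ 2 : ℝ) : ℂ) := by
    rw [← gfabd_star_dot_self]
    have hstar : star (∑ i, γ i • ψ i) = ∑ i, (starRingEnd ℂ) (γ i) • star (ψ i) := by
      rw [star_sum]
      exact Finset.sum_congr rfl fun i _ => by rw [star_smul]; rfl
    rw [hstar, gfabd_sum_dot]
    rw [Complex.ofReal_sum]
    refine Finset.sum_congr rfl fun i _ => ?_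
    rw [smul_dotProduct, gfabd_dot_sum]
    have hb : ∀ b : Fin n, star (ψ i) ⬝ᵥ (γ b • ψ b) = if i = b then γ b else 0 := fun b => by
      rw [dotProduct_smul, horth i b]
      by_cases h : i = b <;> simp [h]
    rw [Finset.sum_congr rfl fun b _ => hb b, Finset.sum_ite_eq univ i γ, if_pos (mem_univ i),
      smul_eq_mul, mul_comm, Complex.mul_conj']
    push_cast
    ring
  exact_mod_cast h2

lemma gfabd_N2_nonneg {n : ℕ} (a : Fin n → ℂ) : 0 ≤ gfabdN2 a :=
  Finset.sum_nonneg fun i _ => sq_nonneg _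

lemma gfabd_norm_symm {n : ℕ} (y : Fin n → ℂ) :
    ‖((WithLp.equiv 2 (Fin n → ℂ)).symm y : EuclideanSpace ℂ (Fin n))‖
      = Real.sqrt (gfabdN2 y) := by
  rw [EuclideanSpace.norm_eq]
  rfl

lemma gfabd_toE_apply {n : ℕ} (M : Matrix (Fin n) (Fin n) ℂ) (v : EuclideanSpace ℂ (Fin n)) :
    Matrix.toEuclideanCLM (𝕜 := ℂ) M v
      = (WithLp.equiv 2 (Fin n → ℂ)).symm (M *ᵥ (WithLp.equiv 2 (Fin n → ℂ)) v) := by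
  have := Matrix.ofLp_toEuclideanCLM (𝕜 := ℂ) M v
  exact (WithLp.equiv 2 (Fin n → ℂ)).injective this

lemma gfabd_opNorm_le {n : ℕ} (M : Matrix (Fin n) (Fin n) ℂ) (c : ℝ) (hc : 0 ≤ c)
    (h : ∀ x : Fin n → ℂ, gfabdN2 (M *ᵥ x) ≤ c ^ 2 * gfabdN2 x) : opNorm M ≤ c := by
  refine ContinuousLinearMap.opNorm_le_bound _ hc fun v => ?_
  rw [gfabd_toE_apply, gfabd_norm_symm]
  have hv : ‖v‖ = Real.sqrt (gfabdN2 ((WithLp.equiv 2 (Fin n → ℂ)) v)) := by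
    rw [← gfabd_norm_symm]
    simp
  rw [hv]
  calc Real.sqrt (gfabdN2 (M *ᵥ (WithLp.equiv 2 (Fin n → ℂ)) v))
      ≤ Real.sqrt (c ^ 2 * gfabdN2 ((WithLp.equiv 2 (Fin n → ℂ)) v)) :=
        Real.sqrt_le_sqrt (h _)
    _ = c * Real.sqrt (gfabdN2 ((WithLp.equiv 2 (Fin n → ℂ)) v)) := by
        rw [Real.sqrt_mul (sq_nonneg c), Real.sqrt_sq hc]

lemma gfabd_N2_mulVec_le {n : ℕ} (A : Matrix (Fin n) (Fin n) ℂ) (y : Fin n → ℂ) :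
    gfabdN2 (A *ᵥ y) ≤ opNorm A ^ 2 * gfabdN2 y := by
  have h1 : ‖Matrix.toEuclideanCLM (𝕜 := ℂ) A ((WithLp.equiv 2 (Fin n → ℂ)).symm y)‖
      ≤ opNorm A * ‖((WithLp.equiv 2 (Fin n → ℂ)).symm y : EuclideanSpace ℂ (Fin n))‖ :=
    (Matrix.toEuclideanCLM (𝕜 := ℂ) A).le_opNorm _
  rw [gfabd_toE_apply, Equiv.apply_symm_apply, gfabd_norm_symm, gfabd_norm_symm] at h1
  have h2 := mul_self_le_mul_self (Real.sqrt_nonneg _) h1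
  rw [Real.mul_self_sqrt (gfabd_N2_nonneg _)] at h2
  calc gfabdN2 (A *ᵥ y) ≤ (opNorm A * Real.sqrt (gfabdN2 y)) *
        (opNorm A * Real.sqrt (gfabdN2 y)) := h2
    _ = opNorm A ^ 2 * gfabdN2 y := by
        rw [mul_mul_mul_comm, Real.mul_self_sqrt (gfabd_N2_nonneg _)]
        ring

section main

variable {d : ℕ} (ψ : Fin (d + 1) → Fin (d + 1) → ℂ) (E : Fin (d + 1) → ℝ)
  (A : Matrix (Fin (d + 1)) (Fin (d + 1)) ℂ) (σ : ℝ)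

/-- scalar coefficient of the (i,j) block of the filtered operator -/
def gfabdCoef (i j : Fin (d + 1)) : ℂ :=
  (Real.exp (-((E i - E j) ^ 2) / (2 * σ ^ 2)) : ℂ) * (star (ψ i) ⬝ᵥ (A *ᵥ ψ j))

/-- the (i,j) block of the filtered operator -/
def gfabdG (i j : Fin (d + 1)) : Matrix (Fin (d + 1)) (Fin (d + 1)) ℂ :=
  gfabdCoef ψ E A σ i j • vecMulVec (ψ i) (star (ψ j))

/-- the candidate `A⊥` -/
def gfabdPerp : Matrix (Fin (d + 1)) (Fin (d + 1)) ℂ :=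
  ∑ i, ∑ j, if i ≠ 0 ∧ j ≠ 0 then gfabdG ψ E A σ i j else 0

lemma gfabdG_eq (i j : Fin (d + 1)) :
    gfabdG ψ E A σ i j
      = (Real.exp (-((E i - E j) ^ 2) / (2 * σ ^ 2)) : ℂ) • (ketbra ψ i * A * ketbra ψ j) := by
  rw [gfabd_ketbra_mul_mul, gfabdG, gfabdCoef, mul_smul]

lemma gfabd_filtered_eq_sumG :
    gaussFiltered ψ E A σ = ∑ i, ∑ j, gfabdG ψ E A σ i j := by
  rw [gfabd_gaussFiltered_eq]
  exact Finset.sum_congr rfl fun i _ => Finset.sum_congr rfl fun j _ => (gfabdG_eq ψ E A σ i j).symm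

lemma gfabdG_mulVec (i j : Fin (d + 1)) (x : Fin (d + 1) → ℂ) :
    gfabdG ψ E A σ i j *ᵥ x = (gfabdCoef ψ E A σ i j * (star (ψ j) ⬝ᵥ x)) • ψ i := by
  rw [gfabdG, Matrix.smul_mulVec, gfabd_vecMulVec_mulVec, smul_smul]

end main

section main2

variable {d : ℕ} (ψ : Fin (d + 1) → Fin (d + 1) → ℂ) (E : Fin (d + 1) → ℝ)
  (A : Matrix (Fin (d + 1)) (Fin (d + 1)) ℂ) (σ : ℝ)
  (horth : ∀ i j, star (ψ i) ⬝ᵥ ψ j = if i = j then (1 : ℂ) else 0)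

include horth in
lemma gfabdPerp_mulVec_zero : gfabdPerp ψ E A σ *ᵥ ψ 0 = 0 := by
  rw [gfabdPerp, gfabd_sum_mulVec]
  refine Finset.sum_eq_zero fun i _ => ?_
  rw [gfabd_sum_mulVec]
  refine Finset.sum_eq_zero fun j _ => ?_
  by_cases h : i ≠ 0 ∧ j ≠ 0
  · rw [if_pos h, gfabdG_mulVec, horth j 0, if_neg h.2]
    simp
  · rw [if_neg h, Matrix.zero_mulVec]

include horth in
lemma gfabdPerp_vecMul_zero : star (ψ 0) ᵥ* gfabdPerp ψ E A σ = 0 := by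
  rw [gfabdPerp, gfabd_sum_vecMul]
  refine Finset.sum_eq_zero fun i _ => ?_
  rw [gfabd_sum_vecMul]
  refine Finset.sum_eq_zero fun j _ => ?_
  by_cases h : i ≠ 0 ∧ j ≠ 0
  · rw [if_pos h, gfabdG, gfabd_vecMul_smulM, gfabd_vecMul_vecMulVec, horth 0 i,
      if_neg (fun hh => h.1 hh.symm)]
    simp
  · rw [if_neg h, Matrix.vecMul_zero]

lemma gfabd_decomp :
    gaussFiltered ψ E A σ - ketbra ψ 0 * A * ketbra ψ 0 - gfabdPerp ψ E A σ
      = ∑ i, ∑ j, ((if i = 0 ∧ j ≠ 0 then gfabdG ψ E A σ i j else 0)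
          + (if i ≠ 0 ∧ j = 0 then gfabdG ψ E A σ i j else 0)) := by
  have hPAP : ketbra ψ 0 * A * ketbra ψ 0 = gfabdG ψ E A σ 0 0 := by
    rw [gfabdG_eq]
    simp
  have h00 : gfabdG ψ E A σ 0 0
      = ∑ i, ∑ j, (if i = 0 ∧ j = 0 then gfabdG ψ E A σ i j else 0) := by
    have hrow : ∀ i : Fin (d + 1),
        (∑ j, if i = 0 ∧ j = 0 then gfabdG ψ E A σ i j else 0)
          = if i = 0 then gfabdG ψ E A σ i 0 else 0 := by
      intro i
      by_cases hi : i = 0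
      · subst hi; simp
      · simp [hi]
    rw [Finset.sum_congr rfl fun i _ => hrow i,
      Finset.sum_ite_eq' univ (0 : Fin (d + 1)) (fun i => gfabdG ψ E A σ i 0),
      if_pos (Finset.mem_univ _)]
  rw [gfabd_filtered_eq_sumG, hPAP, h00, gfabdPerp, ← Finset.sum_sub_distrib,
    ← Finset.sum_sub_distrib]
  refine Finset.sum_congr rfl fun i _ => ?_
  rw [← Finset.sum_sub_distrib, ← Finset.sum_sub_distrib]
  refine Finset.sum_congr rfl fun j _ => ?_
  by_cases hi : i = 0 <;> by_cases hj : j = 0 <;> simp [hi, hj]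

end main2

section main3

variable {d : ℕ} (ψ : Fin (d + 1) → Fin (d + 1) → ℂ) (E : Fin (d + 1) → ℝ)
  (A : Matrix (Fin (d + 1)) (Fin (d + 1)) ℂ) (σ : ℝ) (x : Fin (d + 1) → ℂ)

/-- coefficients of `R *ᵥ x` in the basis `ψ` -/
def gfabdGamma (i : Fin (d + 1)) : ℂ :=
  ∑ j, ((if i = 0 ∧ j ≠ 0 then gfabdCoef ψ E A σ i j * (star (ψ j) ⬝ᵥ x) else 0)
    + (if i ≠ 0 ∧ j = 0 then gfabdCoef ψ E A σ i j * (star (ψ j) ⬝ᵥ x) else 0))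

lemma gfabdGamma_zero :
    gfabdGamma ψ E A σ x 0
      = ∑ j, (if j = 0 then 0 else gfabdCoef ψ E A σ 0 j * (star (ψ j) ⬝ᵥ x)) := by
  refine Finset.sum_congr rfl fun j _ => ?_
  by_cases hj : j = 0 <;> simp [gfabdGamma, hj]

lemma gfabdGamma_succ (i : Fin d) :
    gfabdGamma ψ E A σ x i.succ = gfabdCoef ψ E A σ i.succ 0 * (star (ψ 0) ⬝ᵥ x) := by
  unfold gfabdGamma
  rw [Finset.sum_eq_single 0]
  · rw [if_neg (fun h => Fin.succ_ne_zero i h.1), if_pos ⟨Fin.succ_ne_zero i, rfl⟩, zero_add]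
  · intro b _ hb
    rw [if_neg (fun h => Fin.succ_ne_zero i h.1), if_neg (fun h => hb h.2), add_zero]
  · intro h
    exact absurd (Finset.mem_univ _) h

lemma gfabd_R_mulVec :
    (∑ i, ∑ j, ((if i = 0 ∧ j ≠ 0 then gfabdG ψ E A σ i j else 0)
        + (if i ≠ 0 ∧ j = 0 then gfabdG ψ E A σ i j else 0))) *ᵥ x
      = ∑ i, gfabdGamma ψ E A σ x i • ψ i := by
  rw [gfabd_sum_mulVec]
  refine Finset.sum_congr rfl fun i _ => ?_
  rw [gfabd_sum_mulVec, gfabdGamma, Finset.sum_smul]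
  refine Finset.sum_congr rfl fun j _ => ?_
  rw [Matrix.add_mulVec, add_smul]
  congr 1
  · by_cases h : i = 0 ∧ j ≠ 0
    · rw [if_pos h, if_pos h, gfabdG_mulVec]
    · rw [if_neg h, if_neg h, Matrix.zero_mulVec, zero_smul]
  · by_cases h : i ≠ 0 ∧ j = 0
    · rw [if_pos h, if_pos h, gfabdG_mulVec]
    · rw [if_neg h, if_neg h, Matrix.zero_mulVec, zero_smul]

lemma gfabdCoef_norm (i j : Fin (d + 1)) :
    ‖gfabdCoef ψ E A σ i j‖
      = Real.exp (-((E i - E j) ^ 2) / (2 * σ ^ 2)) * ‖star (ψ i) ⬝ᵥ (A *ᵥ ψ j)‖ := by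
  rw [gfabdCoef, norm_mul, Complex.norm_real, Real.norm_eq_abs, abs_of_pos (Real.exp_pos _)]

end main3

lemma gfabd_key {d : ℕ} (ψ : Fin (d + 1) → Fin (d + 1) → ℂ) (E : Fin (d + 1) → ℝ)
    (A : Matrix (Fin (d + 1)) (Fin (d + 1)) ℂ) (Δ σ : ℝ)
    (horth : ∀ i j, star (ψ i) ⬝ᵥ ψ j = if i = j then (1 : ℂ) else 0)
    (hcomplete : ∑ i, ketbra ψ i = 1)
    (hgap : ∀ i : Fin (d + 1), i ≠ 0 → E 0 + Δ ≤ E i)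
    (hΔ : 0 < Δ) (hσ : 0 < σ)
    (hA : A.IsHermitian) (hAnorm : opNorm A ≤ 1) (x : Fin (d + 1) → ℂ) :
    gfabdN2 ((∑ i, ∑ j, ((if i = 0 ∧ j ≠ 0 then gfabdG ψ E A σ i j else 0)
        + (if i ≠ 0 ∧ j = 0 then gfabdG ψ E A σ i j else 0))) *ᵥ x)
      ≤ (Real.exp (-(Δ ^ 2) / (2 * σ ^ 2))) ^ 2 * gfabdN2 x := by
  have hεpos : 0 < Real.exp (-(Δ ^ 2) / (2 * σ ^ 2)) := Real.exp_pos _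
  have hexp : ∀ i j : Fin (d + 1), Δ ^ 2 ≤ (E i - E j) ^ 2 →
      Real.exp (-((E i - E j) ^ 2) / (2 * σ ^ 2)) ≤ Real.exp (-(Δ ^ 2) / (2 * σ ^ 2)) := by
    intro i j h
    apply Real.exp_le_exp.2
    have h2 : (0 : ℝ) < 2 * σ ^ 2 := by positivity
    exact (div_le_div_iff_of_pos_right h2).2 (by linarith)
  have hgap2 : ∀ i j : Fin (d + 1), (i = 0 ∧ j ≠ 0) ∨ (i ≠ 0 ∧ j = 0) →
      Δ ^ 2 ≤ (E i - E j) ^ 2 := by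
    rintro i j (⟨hi, hj⟩ | ⟨hi, hj⟩)
    · subst hi; have := hgap j hj; nlinarith
    · subst hj; have := hgap i hi; nlinarith
  have hT : ∑ j, ‖star (ψ j) ⬝ᵥ x‖ ^ 2 = gfabdN2 x := gfabd_parseval ψ hcomplete x
  have ht0 : ‖star (ψ 0) ⬝ᵥ x‖ ^ 2 ≤ gfabdN2 x := by
    rw [← hT]
    exact Finset.single_le_sum (f := fun j => ‖star (ψ j) ⬝ᵥ x‖ ^ 2)
      (fun j _ => sq_nonneg _) (Finset.mem_univ 0)
  have hopA : (0 : ℝ) ≤ opNorm A := norm_nonneg _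
  have hψ0 : gfabdN2 (ψ 0) = 1 := by
    have h := horth 0 0
    rw [gfabd_star_dot_self, if_pos rfl] at h
    exact_mod_cast h
  have hNb : gfabdN2 (A *ᵥ ψ 0) ≤ 1 := by
    have := gfabd_N2_mulVec_le A (ψ 0)
    rw [hψ0, mul_one] at this
    nlinarith
  have hSd : ∑ i, ‖star (ψ i) ⬝ᵥ (A *ᵥ ψ 0)‖ ^ 2 ≤ 1 := by
    rw [gfabd_parseval ψ hcomplete]
    exact hNb
  have hSa : ∑ j, ‖star (ψ 0) ⬝ᵥ (A *ᵥ ψ j)‖ ^ 2 ≤ 1 := by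
    have hαsym : ∀ j, ‖star (ψ 0) ⬝ᵥ (A *ᵥ ψ j)‖ = ‖star (ψ j) ⬝ᵥ (A *ᵥ ψ 0)‖ := by
      intro j
      rw [Matrix.dotProduct_mulVec]
      have h2 : star (ψ 0) ᵥ* A = star (A *ᵥ ψ 0) := by
        rw [Matrix.star_mulVec, hA.eq]
      rw [h2, Matrix.star_dotProduct, norm_star]
    rw [Finset.sum_congr rfl fun j _ => by rw [hαsym j]]
    exact hSd
  rw [gfabd_R_mulVec, gfabd_N2_coeff ψ horth, Fin.sum_univ_succ]
  have hγ0 : ‖gfabdGamma ψ E A σ x 0‖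
      ≤ ∑ j, ((if j = 0 then 0 else Real.exp (-(Δ ^ 2) / (2 * σ ^ 2))
            * ‖star (ψ 0) ⬝ᵥ (A *ᵥ ψ j)‖)
          * (if j = 0 then 0 else ‖star (ψ j) ⬝ᵥ x‖)) := by
    rw [gfabdGamma_zero]
    refine le_trans (norm_sum_le _ _) (Finset.sum_le_sum fun j _ => ?_)
    by_cases hj : j = 0
    · simp [hj]
    · simp only [if_neg hj]
      rw [norm_mul, gfabdCoef_norm]
      have h := hexp 0 j (hgap2 0 j (Or.inl ⟨rfl, hj⟩))
      nlinarith [norm_nonneg (star (ψ 0) ⬝ᵥ (A *ᵥ ψ j)), norm_nonneg (star (ψ j) ⬝ᵥ x),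
        mul_nonneg (norm_nonneg (star (ψ 0) ⬝ᵥ (A *ᵥ ψ j))) (norm_nonneg (star (ψ j) ⬝ᵥ x))]
  have hcc : ∑ j, (if j = 0 then 0 else Real.exp (-(Δ ^ 2) / (2 * σ ^ 2))
        * ‖star (ψ 0) ⬝ᵥ (A *ᵥ ψ j)‖) ^ 2
      ≤ Real.exp (-(Δ ^ 2) / (2 * σ ^ 2)) ^ 2 := by
    calc ∑ j, (if j = 0 then 0 else Real.exp (-(Δ ^ 2) / (2 * σ ^ 2))
            * ‖star (ψ 0) ⬝ᵥ (A *ᵥ ψ j)‖) ^ 2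
        ≤ ∑ j, Real.exp (-(Δ ^ 2) / (2 * σ ^ 2)) ^ 2 * ‖star (ψ 0) ⬝ᵥ (A *ᵥ ψ j)‖ ^ 2 := by
          refine Finset.sum_le_sum fun j _ => ?_
          by_cases hj : j = 0
          · simp only [if_pos hj, zero_pow two_ne_zero]
            positivity
          · simp only [if_neg hj]
            rw [mul_pow]
      _ = Real.exp (-(Δ ^ 2) / (2 * σ ^ 2)) ^ 2 * ∑ j, ‖star (ψ 0) ⬝ᵥ (A *ᵥ ψ j)‖ ^ 2 := by
          rw [Finset.mul_sum]
      _ ≤ Real.exp (-(Δ ^ 2) / (2 * σ ^ 2)) ^ 2 * 1 :=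
          mul_le_mul_of_nonneg_left hSa (sq_nonneg _)
      _ = Real.exp (-(Δ ^ 2) / (2 * σ ^ 2)) ^ 2 := mul_one _
  have htt : ∑ j, (if j = 0 then 0 else ‖star (ψ j) ⬝ᵥ x‖) ^ 2
      = gfabdN2 x - ‖star (ψ 0) ⬝ᵥ x‖ ^ 2 := by
    have hpt : ∀ j : Fin (d + 1), (if j = 0 then 0 else ‖star (ψ j) ⬝ᵥ x‖) ^ 2
        = ‖star (ψ j) ⬝ᵥ x‖ ^ 2 - (if j = 0 then ‖star (ψ j) ⬝ᵥ x‖ ^ 2 else 0) := by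
      intro j
      by_cases hj : j = 0 <;> simp [hj]
    rw [Finset.sum_congr rfl fun j _ => hpt j, Finset.sum_sub_distrib, hT,
      Finset.sum_ite_eq' univ (0 : Fin (d + 1)) (fun j => ‖star (ψ j) ⬝ᵥ x‖ ^ 2),
      if_pos (Finset.mem_univ _)]
  have hγ0sq : ‖gfabdGamma ψ E A σ x 0‖ ^ 2
      ≤ Real.exp (-(Δ ^ 2) / (2 * σ ^ 2)) ^ 2 * (gfabdN2 x - ‖star (ψ 0) ⬝ᵥ x‖ ^ 2) := by
    have h1 := pow_le_pow_left₀ (norm_nonneg _) hγ0 2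
    have hCS := Finset.sum_mul_sq_le_sq_mul_sq univ
      (fun j => if j = 0 then 0 else Real.exp (-(Δ ^ 2) / (2 * σ ^ 2))
        * ‖star (ψ 0) ⬝ᵥ (A *ᵥ ψ j)‖)
      (fun j => if j = 0 then 0 else ‖star (ψ j) ⬝ᵥ x‖)
    refine le_trans h1 (le_trans hCS ?_)
    rw [htt]
    have hnn : (0 : ℝ) ≤ gfabdN2 x - ‖star (ψ 0) ⬝ᵥ x‖ ^ 2 := by linarith
    exact mul_le_mul_of_nonneg_right hcc hnn
  have hsucc : ∑ i : Fin d, ‖gfabdGamma ψ E A σ x i.succ‖ ^ 2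
      ≤ Real.exp (-(Δ ^ 2) / (2 * σ ^ 2)) ^ 2 * ‖star (ψ 0) ⬝ᵥ x‖ ^ 2 := by
    have hb : ∑ i : Fin d, ‖star (ψ i.succ) ⬝ᵥ (A *ᵥ ψ 0)‖ ^ 2 ≤ 1 := by
      rw [Fin.sum_univ_succ] at hSd
      nlinarith [sq_nonneg ‖star (ψ (0 : Fin (d + 1))) ⬝ᵥ (A *ᵥ ψ 0)‖]
    calc ∑ i : Fin d, ‖gfabdGamma ψ E A σ x i.succ‖ ^ 2
        ≤ ∑ i : Fin d, Real.exp (-(Δ ^ 2) / (2 * σ ^ 2)) ^ 2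
            * ‖star (ψ i.succ) ⬝ᵥ (A *ᵥ ψ 0)‖ ^ 2 * ‖star (ψ 0) ⬝ᵥ x‖ ^ 2 := by
          refine Finset.sum_le_sum fun i _ => ?_
          rw [gfabdGamma_succ, norm_mul, mul_pow, gfabdCoef_norm, mul_pow]
          have hle := hexp i.succ 0 (hgap2 i.succ 0 (Or.inr ⟨Fin.succ_ne_zero i, rfl⟩))
          have h1 : Real.exp (-((E i.succ - E 0) ^ 2) / (2 * σ ^ 2)) ^ 2
              ≤ Real.exp (-(Δ ^ 2) / (2 * σ ^ 2)) ^ 2 :=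
            pow_le_pow_left₀ (Real.exp_pos _).le hle 2
          exact mul_le_mul_of_nonneg_right
            (mul_le_mul_of_nonneg_right h1 (sq_nonneg _)) (sq_nonneg _)
      _ = Real.exp (-(Δ ^ 2) / (2 * σ ^ 2)) ^ 2 * ‖star (ψ 0) ⬝ᵥ x‖ ^ 2
            * ∑ i : Fin d, ‖star (ψ i.succ) ⬝ᵥ (A *ᵥ ψ 0)‖ ^ 2 := by
          rw [Finset.mul_sum]
          exact Finset.sum_congr rfl fun i _ => by ring
      _ ≤ Real.exp (-(Δ ^ 2) / (2 * σ ^ 2)) ^ 2 * ‖star (ψ 0) ⬝ᵥ x‖ ^ 2 * 1 :=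
          mul_le_mul_of_nonneg_left hb (by positivity)
      _ = Real.exp (-(Δ ^ 2) / (2 * σ ^ 2)) ^ 2 * ‖star (ψ 0) ⬝ᵥ x‖ ^ 2 := mul_one _
  nlinarith [hγ0sq, hsucc, ht0]


/-- almost block-diagonality of the Gaussian-filtered operator:
`Â_f ≈ |ψ₀⟩⟨ψ₀| A |ψ₀⟩⟨ψ₀| + A⊥` with `A⊥|ψ₀⟩ = 0`, `⟨ψ₀|A⊥ = 0`,
up to error `e^{−Δ²/(2σ²)}` in operator norm. -/
theorem gauss_filtered_almost_block_diagonal {d : ℕ} (ψ : Fin (d + 1) → Fin (d + 1) → ℂ)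
    (E : Fin (d + 1) → ℝ) (H A : Matrix (Fin (d + 1)) (Fin (d + 1)) ℂ) (Δ σ : ℝ)
    (horth : ∀ i j, star (ψ i) ⬝ᵥ ψ j = if i = j then (1 : ℂ) else 0)
    (hcomplete : ∑ i, ketbra ψ i = 1)
    (hH : H = ∑ i, (E i : ℂ) • ketbra ψ i)
    (hgap : ∀ i : Fin (d + 1), i ≠ 0 → E 0 + Δ ≤ E i)
    (hΔ : 0 < Δ) (hσ : 0 < σ)
    (hA : A.IsHermitian) (hAnorm : opNorm A ≤ 1) :
    ∃ Aperp : Matrix (Fin (d + 1)) (Fin (d + 1)) ℂ,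
      Aperp.mulVec (ψ 0) = 0 ∧
      Matrix.vecMul (star (ψ 0)) Aperp = 0 ∧
      opNorm (gaussFiltered ψ E A σ - ketbra ψ 0 * A * ketbra ψ 0 - Aperp)
        ≤ Real.exp (-(Δ ^ 2) / (2 * σ ^ 2)) := by
  refine ⟨gfabdPerp ψ E A σ, gfabdPerp_mulVec_zero ψ E A σ horth,
    gfabdPerp_vecMul_zero ψ E A σ horth, ?_⟩
  rw [gfabd_decomp]
  exact gfabd_opNorm_le _ _ (Real.exp_pos _).le
    (fun x => gfabd_key ψ E A Δ σ horth hcomplete hgap hΔ hσ hA hAnorm x)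

end
end

section
/- Let H have a unique ground state |ψ₀⟩ with spectral gap ≥ Δ, and let f be a filter whose Fourier transform satisfies f̂(ν) = 0 for |ν| ≥ Δ and f̂(0) = 1. Then the filtered operator Â_f is exactly block-diagonal: Â_f = ⟨ψ₀|A|ψ₀⟩ · |ψ₀⟩⟨ψ₀| + A⊥ for some operator A⊥ with A⊥|ψ₀⟩ = 0 and ⟨ψ₀|A⊥ = 0. -/
open Matrix Finset

noncomputable section

/-- The filtered operator `Â_f = ∑_ν f̂(−ν) A_ν`, specified via the Fourier transform `f̂`. -/
def sumFiltered {n : ℕ} (ψ : Fin n → Fin n → ℂ) (E : Fin n → ℝ)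
    (A : Matrix (Fin n) (Fin n) ℂ) (fhat : ℝ → ℂ) : Matrix (Fin n) (Fin n) ℂ :=
  ∑ ν ∈ bohrSet E, fhat (-ν) • bohrComp ψ E A ν

/-! Auxiliary lemmas -/

lemma vecMulVec_mulVec' {n : ℕ} (w v x : Fin n → ℂ) :
    (Matrix.vecMulVec w v).mulVec x = (v ⬝ᵥ x) • w := by
  ext i
  simp only [Matrix.mulVec, Matrix.vecMulVec_apply, dotProduct, Pi.smul_apply,
    smul_eq_mul, Finset.sum_mul]
  exact Finset.sum_congr rfl fun j _ => by ring

lemma vecMul_vecMulVec' {n : ℕ} (x w v : Fin n → ℂ) :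
    Matrix.vecMul x (Matrix.vecMulVec w v) = (x ⬝ᵥ w) • v := by
  ext j
  simp only [Matrix.vecMul, Matrix.vecMulVec_apply, dotProduct, Pi.smul_apply,
    smul_eq_mul, Finset.sum_mul]
  exact Finset.sum_congr rfl fun i _ => by ring

lemma sum_mulVec' {n : ℕ} {γ : Type*} (s : Finset γ) (f : γ → Matrix (Fin n) (Fin n) ℂ)
    (v : Fin n → ℂ) : (∑ x ∈ s, f x).mulVec v = ∑ x ∈ s, (f x).mulVec v := by
  ext i
  simp only [Matrix.mulVec, dotProduct, Matrix.sum_apply, Finset.sum_apply, Finset.sum_mul]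
  rw [Finset.sum_comm]

lemma vecMul_sum' {n : ℕ} {γ : Type*} (s : Finset γ) (f : γ → Matrix (Fin n) (Fin n) ℂ)
    (v : Fin n → ℂ) : Matrix.vecMul v (∑ x ∈ s, f x) = ∑ x ∈ s, Matrix.vecMul v (f x) := by
  ext i
  simp only [Matrix.vecMul, dotProduct, Matrix.sum_apply, Finset.sum_apply, Finset.mul_sum]
  rw [Finset.sum_comm]

lemma vecMul_smul' {n : ℕ} (c : ℂ) (M : Matrix (Fin n) (Fin n) ℂ) (v : Fin n → ℂ) :
    Matrix.vecMul v (c • M) = c • Matrix.vecMul v M := by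
  ext i
  simp only [Matrix.vecMul, dotProduct, Matrix.smul_apply, Pi.smul_apply,
    smul_eq_mul, Finset.mul_sum]
  exact Finset.sum_congr rfl fun j _ => by ring

lemma sumFiltered_eq {n : ℕ} (ψ : Fin n → Fin n → ℂ) (E : Fin n → ℝ)
    (A : Matrix (Fin n) (Fin n) ℂ) (fhat : ℝ → ℂ) :
    sumFiltered ψ E A fhat
      = ∑ i, ∑ j, fhat (E j - E i) • (ketbra ψ i * A * ketbra ψ j) := by
  unfold sumFiltered bohrComp
  simp only [Finset.smul_sum]
  rw [Finset.sum_comm]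
  refine Finset.sum_congr rfl fun i _ => ?_
  rw [Finset.sum_comm]
  refine Finset.sum_congr rfl fun j _ => ?_
  rw [Finset.sum_eq_single (E i - E j)]
  · rw [if_pos rfl, neg_sub]
  · intro b _ hb
    rw [if_neg fun h => hb h.symm, smul_zero]
  · intro h
    exact absurd (Finset.mem_image.mpr ⟨(i, j), Finset.mem_univ _, rfl⟩) h

/-- with a filter supported in `(−Δ, Δ)` with `f̂(0) = 1`, the filtered
operator is exactly block-diagonal:
`Â_f = ⟨ψ₀|A|ψ₀⟩·|ψ₀⟩⟨ψ₀| + A⊥` with `A⊥|ψ₀⟩ = 0` and `⟨ψ₀|A⊥ = 0`. -/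
theorem exact_filter_block_diagonal {d : ℕ} (ψ : Fin (d + 1) → Fin (d + 1) → ℂ)
    (E : Fin (d + 1) → ℝ) (H A : Matrix (Fin (d + 1)) (Fin (d + 1)) ℂ) (Δ : ℝ)
    (fhat : ℝ → ℂ)
    (horth : ∀ i j, star (ψ i) ⬝ᵥ ψ j = if i = j then (1 : ℂ) else 0)
    (hcomplete : ∑ i, ketbra ψ i = 1)
    (hH : H = ∑ i, (E i : ℂ) • ketbra ψ i)
    (hgap : ∀ i : Fin (d + 1), i ≠ 0 → E 0 + Δ ≤ E i)
    (hΔ : 0 < Δ)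
    (hA : A.IsHermitian)
    (hfsupp : ∀ ν : ℝ, Δ ≤ |ν| → fhat ν = 0)
    (hf0 : fhat 0 = 1) :
    ∃ Aperp : Matrix (Fin (d + 1)) (Fin (d + 1)) ℂ,
      Aperp.mulVec (ψ 0) = 0 ∧
      Matrix.vecMul (star (ψ 0)) Aperp = 0 ∧
      sumFiltered ψ E A fhat
        = (star (ψ 0) ⬝ᵥ A.mulVec (ψ 0)) • ketbra ψ 0 + Aperp := by
  set c : ℂ := star (ψ 0) ⬝ᵥ A.mulVec (ψ 0) with hc
  set S := sumFiltered ψ E A fhat with hS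
  -- key: fhat vanishes on gapped frequencies
  have hgap' : ∀ i : Fin (d + 1), i ≠ 0 → fhat (E 0 - E i) = 0 := by
    intro i hi
    apply hfsupp
    have := hgap i hi
    rw [abs_sub_comm, abs_of_nonneg (by linarith)]
    linarith
  have hgap'' : ∀ i : Fin (d + 1), i ≠ 0 → fhat (E i - E 0) = 0 := by
    intro i hi
    apply hfsupp
    have := hgap i hi
    rw [abs_of_nonneg (by linarith)]
    linarith
  -- mulVec of ketbra
  have hket : ∀ j : Fin (d + 1), (ketbra ψ j).mulVec (ψ 0)
      = (if j = 0 then (1 : ℂ) else 0) • ψ j := by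
    intro j
    rw [ketbra, vecMulVec_mulVec', horth]
  have hbra : ∀ i : Fin (d + 1), Matrix.vecMul (star (ψ 0)) (ketbra ψ i)
      = (if i = 0 then (1 : ℂ) else 0) • star (ψ i) := by
    intro i
    rw [ketbra, vecMul_vecMulVec', horth]
    congr 1
    simp [eq_comm]
  -- mulVec of S
  have hSmul : S.mulVec (ψ 0) = c • ψ 0 := by
    rw [hS, sumFiltered_eq, sum_mulVec']
    have hterm : ∀ i : Fin (d + 1),
        (∑ j, fhat (E j - E i) • (ketbra ψ i * A * ketbra ψ j)).mulVec (ψ 0)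
          = fhat (E 0 - E i) • (ketbra ψ i * A).mulVec (ψ 0) := by
      intro i
      rw [sum_mulVec', Finset.sum_eq_single 0]
      · rw [smul_mulVec, ← Matrix.mulVec_mulVec, hket, if_pos rfl, one_smul]
      · intro j _ hj
        rw [smul_mulVec, ← Matrix.mulVec_mulVec, hket, if_neg hj, zero_smul,
          Matrix.mulVec_zero, smul_zero]
      · intro h; exact absurd (Finset.mem_univ _) h
    simp only [hterm]
    rw [Finset.sum_eq_single 0]
    · rw [sub_self, hf0, one_smul, ← Matrix.mulVec_mulVec, ketbra, vecMulVec_mulVec', hc]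
    · intro i _ hi
      rw [hgap' i hi, zero_smul]
    · intro h; exact absurd (Finset.mem_univ _) h
  -- vecMul of S
  have hSvec : Matrix.vecMul (star (ψ 0)) S = c • star (ψ 0) := by
    rw [hS, sumFiltered_eq, vecMul_sum', Finset.sum_eq_single 0]
    · rw [vecMul_sum', Finset.sum_eq_single 0]
      · rw [vecMul_smul', sub_self, hf0, one_smul, ← Matrix.vecMul_vecMul,
          ← Matrix.vecMul_vecMul, hbra, if_pos rfl, one_smul,
          show ketbra ψ 0 = Matrix.vecMulVec (ψ 0) (star (ψ 0)) from rfl,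
          vecMul_vecMulVec', ← Matrix.dotProduct_mulVec, hc]
      · intro j _ hj
        rw [vecMul_smul', hgap'' j hj, zero_smul]
      · intro h; exact absurd (Finset.mem_univ _) h
    · intro i _ hi
      rw [vecMul_sum']
      apply Finset.sum_eq_zero
      intro j _
      rw [vecMul_smul', ← Matrix.vecMul_vecMul, ← Matrix.vecMul_vecMul, hbra,
        if_neg hi, zero_smul, Matrix.zero_vecMul, Matrix.zero_vecMul, smul_zero]
    · intro h; exact absurd (Finset.mem_univ _) h
  refine ⟨S - c • ketbra ψ 0, ?_, ?_, ?_⟩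
  · rw [Matrix.sub_mulVec, hSmul, smul_mulVec, ketbra, vecMulVec_mulVec',
      horth, if_pos rfl, one_smul, sub_self]
  · rw [Matrix.vecMul_sub, hSvec, vecMul_smul', ketbra, vecMul_vecMulVec',
      horth, if_pos rfl, one_smul, sub_self]
  · rw [add_sub_cancel]

end
end
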